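/- Let P = {p_1,...,p_n} ⊂ R^d, μ_P = (1/n)∑_{p∈P} δ_p the empirical measure, and m_0 = k_0/n for some integer 1 ≤ k_0 ≤ n. Then for every x ∈ R^d, the distance-to-measure function satisfies d_{μ_P, m_0}(x) = ( (1/k_0) ∑_{p ∈ NN_P^{k_0}(x)} ‖p − x‖^2 )^{1/2}, where NN_P^{k_0}(x) is a set of k_0 nearest neighbours of x in P. -/

import Mathlib

open scoped ENNReal NNReal
open MeasureTheory Metric Filter

noncomputable section

abbrev Euc (d : ℕ) := EuclideanSpace ℝ (Fin d)

/-- `δ_{μ,m}(x) = inf {r > 0 : μ(B̄(x,r)) > m}`. -/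
noncomputable def deltaMeas {d : ℕ} (μ : Measure (Euc d)) (m : ℝ) (x : Euc d) : ℝ :=
  sInf {r : ℝ | 0 < r ∧ m < (μ (Metric.closedBall x r)).toReal}

/-- The distance to the measure `μ` at level `m₀`:
`d_{μ,m₀}(x) = ((1/m₀) ∫_0^{m₀} δ_{μ,m}(x)² dm)^{1/2}`. -/
noncomputable def distToMeas {d : ℕ} (μ : Measure (Euc d)) (m0 : ℝ) (x : Euc d) : ℝ :=
  Real.sqrt ((1 / m0) * ∫ m in (0 : ℝ)..m0, (deltaMeas μ m x) ^ 2)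

/-- Two "nearest-neighbour" sets of the same cardinality have the same sum of values. -/
lemma sum_nn_eq {α : Type*} [DecidableEq α] (F : α → ℝ) (s t : Finset α)
    (hst : s.card = t.card)
    (hs : ∀ i ∈ s, ∀ j ∉ s, F i ≤ F j) (ht : ∀ i ∈ t, ∀ j ∉ t, F i ≤ F j) :
    ∑ i ∈ s, F i = ∑ i ∈ t, F i := by
  have key : ∀ i ∈ s \ t, ∀ j ∈ t \ s, F i = F j := by
    intro i hi j hj
    simp only [Finset.mem_sdiff] at hi hj
    exact le_antisymm (hs i hi.1 j hj.2) (ht j hj.1 i hi.2)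
  have hcard : (s \ t).card = (t \ s).card := Finset.card_sdiff_comm hst
  have h1 : ∑ i ∈ s \ t, F i = ∑ j ∈ t \ s, F j := by
    rcases Finset.eq_empty_or_nonempty (s \ t) with h | ⟨i0, hi0⟩
    · have h' : t \ s = ∅ := Finset.card_eq_zero.mp (by rw [← hcard, h]; simp)
      rw [h, h']
    · rcases Finset.eq_empty_or_nonempty (t \ s) with h' | ⟨j0, hj0⟩
      · rw [h'] at hcard
        simp only [Finset.card_empty] at hcard
        rw [Finset.card_eq_zero.mp hcard, h']
      · calc ∑ i ∈ s \ t, F i = ∑ _i ∈ s \ t, F i0 := by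
              refine Finset.sum_congr rfl fun i hi => ?_
              rw [key i hi j0 hj0, ← key i0 hi0 j0 hj0]
          _ = (s \ t).card • F i0 := by rw [Finset.sum_const]
          _ = (t \ s).card • F i0 := by rw [hcard]
          _ = ∑ j ∈ t \ s, F i0 := by rw [Finset.sum_const]
          _ = ∑ j ∈ t \ s, F j := Finset.sum_congr rfl fun j hj => key i0 hi0 j hj
  have hsplit : ∀ u v : Finset α, ∑ i ∈ u, F i = ∑ i ∈ u ∩ v, F i + ∑ i ∈ u \ v, F i := by
    intro u v
    rw [Finset.sum_inter_add_sum_sdiff]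
  rw [hsplit s t, hsplit t s, Finset.inter_comm t s, h1]

/-- For the empirical measure `μ_P` of `n` points and `m₀ = k₀/n`, the distance to the
measure is `d_{μ_P,m₀}(x) = ((1/k₀) ∑_{p ∈ NN_P^{k₀}(x)} ‖p-x‖²)^{1/2}` where `NN_P^{k₀}(x)`
is any set of `k₀` nearest neighbours of `x` in `P`. -/
theorem statement9 {d n : ℕ} (hn : 0 < n) (p : Fin n → Euc d)
    (k0 : ℕ) (hk0 : 1 ≤ k0) (hk0n : k0 ≤ n)
    (x : Euc d) (s : Finset (Fin n)) (hcard : s.card = k0)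
    (hNN : ∀ i ∈ s, ∀ j ∉ s, dist (p i) x ≤ dist (p j) x) :
    distToMeas ((n : ℝ≥0∞)⁻¹ • ∑ i, Measure.dirac (p i)) ((k0 : ℝ) / n) x
      = Real.sqrt ((1 / (k0 : ℝ)) * ∑ i ∈ s, dist (p i) x ^ 2) := by
  classical
  set μ : Measure (Euc d) := (n : ℝ≥0∞)⁻¹ • ∑ i, Measure.dirac (p i) with hμ
  set f : Fin n → ℝ := fun i => dist (p i) x with hf
  set σ : Equiv.Perm (Fin n) := Tuple.sort f with hσ
  set g : Fin n → ℝ := f ∘ σ with hg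
  have hgmono : Monotone g := Tuple.monotone_sort f
  have hg0 : ∀ a, 0 ≤ g a := fun a => dist_nonneg
  have hnR : (0 : ℝ) < n := Nat.cast_pos.mpr hn
  -- Step 1: measure of closed balls
  have hμball : ∀ r : ℝ, (μ (closedBall x r)).toReal
      = ((Finset.univ.filter fun i => f i ≤ r).card : ℝ) / n := by
    intro r
    have hms : MeasurableSet (closedBall x r) := measurableSet_closedBall
    have h1 : μ (closedBall x r)
        = (n : ℝ≥0∞)⁻¹ * ((Finset.univ.filter fun i => f i ≤ r).card : ℝ≥0∞) := by
      rw [hμ, Measure.smul_apply, smul_eq_mul]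
      congr 1
      have h2 : ((∑ i, Measure.dirac (p i)) (closedBall x r))
          = ∑ i, (Measure.dirac (p i)) (closedBall x r) := by
        rw [Measure.coe_finset_sum]; simp
      rw [h2]
      have h3 : ∀ i, (Measure.dirac (p i)) (closedBall x r)
          = if f i ≤ r then (1 : ℝ≥0∞) else 0 := by
        intro i
        rw [Measure.dirac_apply' _ hms, Set.indicator_apply]
        simp [hf, Metric.mem_closedBall]
      simp_rw [h3]
      rw [Finset.sum_boole]
    rw [h1, ENNReal.toReal_mul, ENNReal.toReal_inv]
    norm_num
    ring
  -- Step 2: counting vs sorted distances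
  have hcount : ∀ (j : Fin n) (r : ℝ),
      g j ≤ r ↔ (j : ℕ) + 1 ≤ (Finset.univ.filter fun i => f i ≤ r).card := by
    intro j r
    constructor
    · intro h
      have hsub : (Finset.Iic j).image σ ⊆ Finset.univ.filter fun i => f i ≤ r := by
        intro i hi
        simp only [Finset.mem_image, Finset.mem_Iic] at hi
        obtain ⟨a, ha, rfl⟩ := hi
        simp only [Finset.mem_filter, Finset.mem_univ, true_and]
        exact le_trans (hgmono ha) h
      calc (j : ℕ) + 1 = (Finset.Iic j).card := (Fin.card_Iic j).symm
        _ = ((Finset.Iic j).image σ).card :=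
            (Finset.card_image_of_injective _ σ.injective).symm
        _ ≤ _ := Finset.card_le_card hsub
    · intro h
      by_contra hr
      push_neg at hr
      have hsub : (Finset.univ.filter fun i => f i ≤ r) ⊆ (Finset.Iio j).image σ := by
        intro i hi
        simp only [Finset.mem_filter, Finset.mem_univ, true_and] at hi
        refine Finset.mem_image.mpr ⟨σ.symm i, ?_, by simp⟩
        rw [Finset.mem_Iio]
        by_contra hle
        push_neg at hle
        have h2 : g j ≤ g (σ.symm i) := hgmono hle
        have h3 : g (σ.symm i) = f i := by simp [hg]
        rw [h3] at h2
        linarith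
      have h4 := Finset.card_le_card hsub
      rw [Finset.card_image_of_injective _ σ.injective, Fin.card_Iio] at h4
      omega
  -- Step 3: the formula for deltaMeas on each interval
  have hdelta : ∀ (j : ℕ) (hj : j < n) (m : ℝ), (j : ℝ) / n ≤ m → m < ((j : ℝ) + 1) / n →
      deltaMeas μ m x = g ⟨j, hj⟩ := by
    intro j hj m hm1 hm2
    have hset : {r : ℝ | 0 < r ∧ m < (μ (closedBall x r)).toReal}
        = {r : ℝ | 0 < r ∧ g ⟨j, hj⟩ ≤ r} := by
      ext r
      simp only [Set.mem_setOf_eq, hμball r]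
      constructor
      · rintro ⟨hr, hmr⟩
        refine ⟨hr, (hcount ⟨j, hj⟩ r).mpr ?_⟩
        have hjc : (j : ℝ) < ((Finset.univ.filter fun i => f i ≤ r).card : ℝ) := by
          have := lt_of_le_of_lt hm1 hmr
          rwa [div_lt_div_iff_of_pos_right hnR] at this
        exact_mod_cast Nat.lt_iff_add_one_le.mp (by exact_mod_cast hjc)
      · rintro ⟨hr, hgr⟩
        refine ⟨hr, ?_⟩
        have hjc := (hcount ⟨j, hj⟩ r).mp hgr
        have hjc' : (j : ℝ) + 1 ≤ ((Finset.univ.filter fun i => f i ≤ r).card : ℝ) := by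
          exact_mod_cast hjc
        calc m < ((j : ℝ) + 1) / n := hm2
          _ ≤ _ := by gcongr
    rw [deltaMeas, hset]
    rcases eq_or_lt_of_le (hg0 ⟨j, hj⟩) with h0 | h0
    · rw [← h0]
      have h1 : {r : ℝ | 0 < r ∧ (0 : ℝ) ≤ r} = Set.Ioi 0 := by
        ext r; simp only [Set.mem_setOf_eq, Set.mem_Ioi, and_iff_left_iff_imp]
        exact le_of_lt
      rw [h1, csInf_Ioi]
    · have h1 : {r : ℝ | 0 < r ∧ g ⟨j, hj⟩ ≤ r} = Set.Ici (g ⟨j, hj⟩) := by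
        ext r
        simp only [Set.mem_setOf_eq, Set.mem_Ici]
        exact ⟨fun h => h.2, fun h => ⟨lt_of_lt_of_le h0 h, h⟩⟩
      rw [h1, csInf_Ici]
  -- Step 4: the integral over each subinterval
  set G : ℕ → ℝ := fun j => if h : j < n then (g ⟨j, h⟩) ^ 2 else 0 with hG
  set a : ℕ → ℝ := fun j => (j : ℝ) / n with ha
  have hab : ∀ j : ℕ, a j ≤ a (j + 1) := by
    intro j
    simp only [ha]
    gcongr
    push_cast; linarith
  have hcong : ∀ j : ℕ, j < k0 → ∀ᵐ m : ℝ, m ∈ Set.uIoc (a j) (a (j + 1)) →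
      (deltaMeas μ m x) ^ 2 = G j := by
    intro j hjk
    have hjn : j < n := lt_of_lt_of_le hjk hk0n
    have h0 : {m : ℝ | m = a (j + 1)}ᶜ ∈ ae (volume : Measure ℝ) := by
      rw [compl_mem_ae_iff]
      have : {m : ℝ | m = a (j + 1)} = {a (j + 1)} := by ext m; simp [eq_comm]
      rw [this]
      exact Real.volume_singleton
    filter_upwards [h0] with m hm hmem
    rw [Set.uIoc_of_le (hab j)] at hmem
    obtain ⟨h1, h2⟩ := hmem
    have hm2 : m < a (j + 1) := lt_of_le_of_ne h2 (by simpa using hm)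
    have hm2' : m < ((j : ℝ) + 1) / n := by
      have : a (j + 1) = ((j : ℝ) + 1) / n := by rw [ha]; push_cast; ring
      rwa [this] at hm2
    rw [hdelta j hjn m (le_of_lt h1) hm2', hG]
    simp [hjn]
  have hstep : ∀ j : ℕ, j < k0 →
      (∫ m in a j..a (j + 1), (deltaMeas μ m x) ^ 2) = G j * (1 / n) := by
    intro j hjk
    rw [intervalIntegral.integral_congr_ae (hcong j hjk), intervalIntegral.integral_const]
    have h1 : a (j + 1) - a j = 1 / n := by rw [ha]; push_cast; ring
    rw [h1, smul_eq_mul]; ring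
  have hint : ∀ j : ℕ, j < k0 →
      IntervalIntegrable (fun m => (deltaMeas μ m x) ^ 2) volume (a j) (a (j + 1)) := by
    intro j hjk
    refine (intervalIntegrable_const (c := G j)).congr_ae ?_
    rw [Filter.EventuallyEq, ae_restrict_iff' measurableSet_uIoc]
    filter_upwards [hcong j hjk] with m hm hmem
    exact (hm hmem).symm
  have hsum := intervalIntegral.sum_integral_adjacent_intervals
    (f := fun m => (deltaMeas μ m x) ^ 2) (μ := volume) (a := a) (n := k0) hint
  have hInt : (∫ m in (0 : ℝ)..((k0 : ℝ) / n), (deltaMeas μ m x) ^ 2)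
      = ∑ j ∈ Finset.range k0, G j * (1 / n) := by
    have h1 : a 0 = 0 := by rw [ha]; simp
    have h2 : a k0 = (k0 : ℝ) / n := by rw [ha]
    rw [← h1, ← h2, ← hsum]
    exact Finset.sum_congr rfl fun j hj => hstep j (Finset.mem_range.mp hj)
  -- Step 5: the sum over sorted indices equals the sum over s
  set F : Fin n → ℝ := fun i => f i ^ 2 with hF
  set t : Finset (Fin n) := (Finset.univ.filter fun b : Fin n => (b : ℕ) < k0).image σ
    with ht
  have hmemt : ∀ i : Fin n, i ∈ t ↔ ((σ.symm i : Fin n) : ℕ) < k0 := by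
    intro i
    rw [ht]
    simp only [Finset.mem_image, Finset.mem_filter, Finset.mem_univ, true_and]
    constructor
    · rintro ⟨b, hb, rfl⟩; simpa using hb
    · intro h; exact ⟨σ.symm i, h, by simp⟩
  have htNN : ∀ i ∈ t, ∀ j ∉ t, F i ≤ F j := by
    intro i hi j hj
    rw [hmemt] at hi hj
    push_neg at hj
    have hab' : (σ.symm i : Fin n) ≤ σ.symm j := by
      rw [Fin.le_def]; omega
    have h1 : g (σ.symm i) ≤ g (σ.symm j) := hgmono hab'
    have h2 : g (σ.symm i) = f i := by simp [hg]
    have h3 : g (σ.symm j) = f j := by simp [hg]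
    rw [h2, h3] at h1
    exact pow_le_pow_left₀ dist_nonneg h1 2
  have hsNN : ∀ i ∈ s, ∀ j ∉ s, F i ≤ F j := by
    intro i hi j hj
    exact pow_le_pow_left₀ dist_nonneg (hNN i hi j hj) 2
  have hfiltermap : (Finset.univ.filter fun b : Fin n => (b : ℕ) < k0)
      = Finset.map (Fin.castLEEmb hk0n) Finset.univ := by
    ext i
    simp only [Finset.mem_filter, Finset.mem_univ, true_and, Finset.mem_map]
    constructor
    · intro h
      exact ⟨⟨(i : ℕ), h⟩, by ext; simp⟩
    · rintro ⟨b, rfl⟩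
      simpa using b.isLt
  have hcardfilter : (Finset.univ.filter fun b : Fin n => (b : ℕ) < k0).card = k0 := by
    rw [hfiltermap, Finset.card_map, Finset.card_univ, Fintype.card_fin]
  have htcard : t.card = k0 := by
    rw [ht, Finset.card_image_of_injective _ σ.injective, hcardfilter]
  have hsumt : ∑ j ∈ Finset.range k0, G j = ∑ i ∈ t, F i := by
    rw [ht, Finset.sum_image (fun b _ c _ h => σ.injective h), hfiltermap, Finset.sum_map,
      ← Fin.sum_univ_eq_sum_range G k0]
    refine Finset.sum_congr rfl fun b _ => ?_
    have hb : (b : ℕ) < n := lt_of_lt_of_le b.isLt hk0n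
    rw [hG]
    simp only [dif_pos hb]
    rfl
  have hsums : ∑ i ∈ t, F i = ∑ i ∈ s, F i :=
    sum_nn_eq F t s (by rw [htcard, hcard]) htNN hsNN
  -- Final computation
  rw [distToMeas, hInt]
  congr 1
  rw [Finset.sum_congr rfl (fun j _ => rfl), ← Finset.sum_mul, hsumt, hsums]
  have hk0R : (0 : ℝ) < k0 := by exact_mod_cast hk0
  rw [one_div_div]
  field_simp
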